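/- Let G=(V,E) be a directed graph, possibly cyclic, whose node set is partitioned as V = O ∪ L into observed and latent nodes, and let G^acy be any σ-acyclification of G. Then for any observed node Y ∈ O, the observed Markov blanket of Y in G under σ-separation equals the observed Markov blanket of Y in G^acy under d-separation: MB_σ^G(Y) = MB_d^{G^acy}(Y). -/

import Mathlib

/-- A directed graph (loopless, possibly cyclic). -/
structure DiGraph (V : Type) where
  Edge : V → V → Prop
  loopless : ∀ v, ¬ Edge v v

namespace DiGraph

variable {V : Type}

/-- Reachability by a directed path (possibly of length zero). -/
def reach (G : DiGraph V) : V → V → Prop := Relation.ReflTransGen G.Edge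

/-- Ancestors of a set: nodes admitting a directed path (possibly of length zero)
to some node of the set. -/
def anc (G : DiGraph V) (S : Set V) : Set V := {Z | ∃ s ∈ S, G.reach Z s}

/-- The strongly connected component of a node. -/
def scc (G : DiGraph V) (X : V) : Set V := {Z | G.reach X Z ∧ G.reach Z X}

/-- Descendants: nodes `Z ≠ X` with a directed path from `X` to `Z`. -/
def de (G : DiGraph V) (X : V) : Set V := {Z | Z ≠ X ∧ Relation.TransGen G.Edge X Z}

/-- Children of a node. -/
def ch (G : DiGraph V) (X : V) : Set V := {Z | G.Edge X Z}

/-- A directed graph is acyclic (a DAG) if it has no directed cycles. -/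
def Acyclic (G : DiGraph V) : Prop := ∀ v, ¬ Relation.TransGen G.Edge v v

end DiGraph

/-- A path between `X` and `Y` in `G`: a sequence of `k+2` distinct nodes,
where consecutive nodes are joined by an edge of `G` in one of the two
orientations (recorded by `dir`: `dir i = true` means the edge
`node i → node (i+1)` is used, `dir i = false` means `node (i+1) → node i`). -/
structure GPath {V : Type} (G : DiGraph V) (X Y : V) where
  k : ℕ
  node : Fin (k + 2) → V
  dir : Fin (k + 1) → Bool
  inj : Function.Injective node
  first : node 0 = X
  last : node (Fin.last (k + 1)) = Y
  adj : ∀ i : Fin (k + 1),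
    (dir i = true → G.Edge (node i.castSucc) (node i.succ)) ∧
    (dir i = false → G.Edge (node i.succ) (node i.castSucc))

namespace GPath

variable {V : Type} {G : DiGraph V} {X Y : V}

/-- The `j`-th interior (non-endpoint) node of the path (position `j+1`). -/
def inner (p : GPath G X Y) (j : Fin p.k) : V := p.node j.succ.castSucc

/-- The interior node at position `j+1` is a collider: both incident edges
of the path point into it. -/
def isCollider (p : GPath G X Y) (j : Fin p.k) : Prop :=
  p.dir j.castSucc = true ∧ p.dir j.succ = false

/-- The path is σ-blocked by `S`. -/
def sigmaBlocked (p : GPath G X Y) (S : Set V) : Prop :=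
  ∃ j : Fin p.k,
    (p.isCollider j ∧ p.inner j ∉ G.anc S) ∨
    (¬ p.isCollider j ∧ p.inner j ∈ S ∧
      ((p.dir j.succ = true ∧ p.node j.succ.succ ∉ G.scc (p.inner j)) ∨
       (p.dir j.castSucc = false ∧ p.node j.castSucc.castSucc ∉ G.scc (p.inner j))))

/-- The path is d-blocked by `S`. -/
def dBlocked (p : GPath G X Y) (S : Set V) : Prop :=
  ∃ j : Fin p.k,
    (p.isCollider j ∧ p.inner j ∉ G.anc S) ∨
    (¬ p.isCollider j ∧ p.inner j ∈ S)

end GPath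

namespace DiGraph

variable {V : Type}

/-- `X` and `Y` are σ-separated given `S`: every path between them is σ-blocked. -/
def sigmaSep (G : DiGraph V) (X Y : V) (S : Set V) : Prop :=
  ∀ p : GPath G X Y, p.sigmaBlocked S

/-- `X` and `Y` are d-separated given `S`: every path between them is d-blocked. -/
def dSep (G : DiGraph V) (X Y : V) (S : Set V) : Prop :=
  ∀ p : GPath G X Y, p.dBlocked S

end DiGraph

/-- `Ga` is a σ-acyclification of `G`. -/
def IsAcyclification {V : Type} (G Ga : DiGraph V) : Prop :=
  Ga.Acyclic ∧
  (∀ X Y : V, X ≠ Y → X ∉ G.scc Y → (Ga.Edge X Y ↔ ∃ W ∈ G.scc Y, G.Edge X W)) ∧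
  (∀ X Y : V, X ≠ Y → X ∈ G.scc Y → Xor' (Ga.Edge X Y) (Ga.Edge Y X))

namespace DiGraph

variable {V : Type}

/-- `S` is the observed Markov blanket of `X` (w.r.t. σ-separation) given the
observed node set `Obs`: the minimal set `S ⊆ Obs \ {X}` such that `X` is
σ-separated from every node of `Obs \ (S ∪ {X})` given `S`. -/
def IsSigmaMB (G : DiGraph V) (Obs : Set V) (X : V) (S : Set V) : Prop :=
  S ⊆ Obs \ {X} ∧
  (∀ W ∈ Obs \ (S ∪ {X}), G.sigmaSep X W S) ∧
  (∀ T ⊆ Obs \ {X}, (∀ W ∈ Obs \ (T ∪ {X}), G.sigmaSep X W T) → S ⊆ T)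

/-- `S` is the observed Markov blanket of `X` (w.r.t. d-separation). -/
def IsDMB (G : DiGraph V) (Obs : Set V) (X : V) (S : Set V) : Prop :=
  S ⊆ Obs \ {X} ∧
  (∀ W ∈ Obs \ (S ∪ {X}), G.dSep X W S) ∧
  (∀ T ⊆ Obs \ {X}, (∀ W ∈ Obs \ (T ∪ {X}), G.dSep X W T) → S ⊆ T)

/-- `Z` is a backdoor adjustment set for `(X, Y)`: `Z` avoids `X`, `Y` and the
descendants of `X`, and σ-blocks every backdoor path from `X` to `Y`
(a path whose first edge has an arrowhead into `X`). -/
def IsBackdoorAdjustment (G : DiGraph V) (X Y : V) (Z : Set V) : Prop :=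
  X ∉ Z ∧ Y ∉ Z ∧ Z ∩ G.de X = ∅ ∧
  ∀ p : GPath G X Y, p.dir 0 = false → p.sigmaBlocked Z

end DiGraph

/-- Pre-treatment assumption: the outcome `Y` has no descendants and the
treatment `X` has no children except possibly `Y`. -/
def PreTreatment {V : Type} (G : DiGraph V) (X Y : V) : Prop :=
  G.de Y = ∅ ∧ G.ch X ⊆ {Y}

section AuxBasic

variable {V : Type}

namespace DiGraph

lemma mem_scc_self (G : DiGraph V) (x : V) : x ∈ G.scc x :=
  ⟨Relation.ReflTransGen.refl, Relation.ReflTransGen.refl⟩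

lemma scc_comm {G : DiGraph V} {x y : V} : x ∈ G.scc y ↔ y ∈ G.scc x := and_comm

lemma scc_symm {G : DiGraph V} {x y : V} (h : x ∈ G.scc y) : y ∈ G.scc x := ⟨h.2, h.1⟩

lemma reach_trans {G : DiGraph V} {x y z : V} (h1 : G.reach x y) (h2 : G.reach y z) :
    G.reach x z := Relation.ReflTransGen.trans h1 h2

lemma scc_eq {G : DiGraph V} {x y : V} (h : x ∈ G.scc y) : G.scc x = G.scc y := by
  obtain ⟨h1, h2⟩ := h
  ext z
  exact ⟨fun ⟨a, b⟩ => ⟨reach_trans h1 a, reach_trans b h2⟩,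
    fun ⟨a, b⟩ => ⟨reach_trans h2 a, reach_trans b h1⟩⟩

lemma mem_scc_trans {G : DiGraph V} {x y z : V} (h1 : x ∈ G.scc y) (h2 : y ∈ G.scc z) :
    x ∈ G.scc z := by rw [← scc_eq h2]; exact h1

lemma anc_of_reach {G : DiGraph V} {S : Set V} {x z : V} (h : G.reach x z)
    (hz : z ∈ G.anc S) : x ∈ G.anc S := by
  obtain ⟨s, hs, hr⟩ := hz
  exact ⟨s, hs, reach_trans h hr⟩

lemma mem_anc_of_mem {G : DiGraph V} {S : Set V} {x : V} (h : x ∈ S) : x ∈ G.anc S :=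
  ⟨x, h, Relation.ReflTransGen.refl⟩

end DiGraph

open DiGraph

/-- A walk (not necessarily injective) of length `n ≥ 1` from `A` to `B`. -/
structure Wk (G : DiGraph V) (A B : V) where
  n : ℕ
  pos : 0 < n
  f : ℕ → V
  d : ℕ → Bool
  hA : f 0 = A
  hB : f n = B
  he : ∀ i, i < n →
    (d i = true → G.Edge (f i) (f (i+1))) ∧ (d i = false → G.Edge (f (i+1)) (f i))

/-- σ-blocking condition at an interior node with values
(prev node, current node, next node, left dir, right dir). -/
def sBlk (G : DiGraph V) (S : Set V) (vp vc vn : V) (dl dr : Bool) : Prop :=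
  (dl = true ∧ dr = false ∧ vc ∉ G.anc S) ∨
  (¬(dl = true ∧ dr = false) ∧ vc ∈ S ∧
    ((dr = true ∧ vn ∉ G.scc vc) ∨ (dl = false ∧ vp ∉ G.scc vc)))

/-- d-blocking condition at an interior node. -/
def dBlk (G : DiGraph V) (S : Set V) (vc : V) (dl dr : Bool) : Prop :=
  (dl = true ∧ dr = false ∧ vc ∉ G.anc S) ∨ (¬(dl = true ∧ dr = false) ∧ vc ∈ S)

def Wk.sOpen {G : DiGraph V} {A B : V} (w : Wk G A B) (S : Set V) : Prop :=
  ∀ i, 0 < i → i < w.n → ¬ sBlk G S (w.f (i-1)) (w.f i) (w.f (i+1)) (w.d (i-1)) (w.d i)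

def Wk.dOpen {G : DiGraph V} {A B : V} (w : Wk G A B) (S : Set V) : Prop :=
  ∀ i, 0 < i → i < w.n → ¬ dBlk G S (w.f i) (w.d (i-1)) (w.d i)

end AuxBasic
section AuxConv

variable {V : Type} {G : DiGraph V} {X Y : V}

open DiGraph

namespace GPath

/-- Convert a `GPath` to a walk. -/
def toWk (p : GPath G X Y) : Wk G X Y := by
  refine ⟨p.k + 1, Nat.succ_pos _,
    fun i => p.node ⟨min i (p.k+1), by omega⟩,
    fun i => p.dir ⟨min i p.k, by omega⟩, ?_, ?_, ?_⟩
  · exact (congrArg p.node (Fin.ext (by simp))).trans p.first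
  · exact (congrArg p.node (Fin.ext (by simp [Fin.last]))).trans p.last
  · intro i hi
    have h1 : (⟨min i (p.k+1), by omega⟩ : Fin (p.k+2)) = (⟨i, hi⟩ : Fin (p.k+1)).castSucc :=
      Fin.ext (by simp; omega)
    have h2 : (⟨min (i+1) (p.k+1), by omega⟩ : Fin (p.k+2)) = (⟨i, hi⟩ : Fin (p.k+1)).succ :=
      Fin.ext (by simp; omega)
    have h3 : (⟨min i p.k, by omega⟩ : Fin (p.k+1)) = ⟨i, hi⟩ :=
      Fin.ext (by simp; omega)
    rw [h1, h2, h3]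
    exact p.adj _

lemma toWk_n (p : GPath G X Y) : p.toWk.n = p.k + 1 := rfl

lemma toWk_f (p : GPath G X Y) {i : ℕ} (h : i ≤ p.k + 1) (hi : i < p.k + 2) :
    p.toWk.f i = p.node ⟨i, hi⟩ := by
  show p.node _ = _
  exact congrArg p.node (Fin.ext (by simp; omega))

lemma toWk_d (p : GPath G X Y) {i : ℕ} (h : i ≤ p.k) (hi : i < p.k + 1) :
    p.toWk.d i = p.dir ⟨i, hi⟩ := by
  show p.dir _ = _
  exact congrArg p.dir (Fin.ext (by simp; omega))

lemma sigmaBlocked_iff (p : GPath G X Y) (S : Set V) :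
    p.sigmaBlocked S ↔ ∃ i, 0 < i ∧ i < p.toWk.n ∧
      sBlk G S (p.toWk.f (i-1)) (p.toWk.f i) (p.toWk.f (i+1)) (p.toWk.d (i-1)) (p.toWk.d i) := by
  constructor
  · rintro ⟨j, hj⟩
    refine ⟨j.val + 1, by omega, by rw [toWk_n]; omega, ?_⟩
    have e0 : p.toWk.f (j.val + 1 - 1) = p.node j.castSucc.castSucc := by
      rw [p.toWk_f (by omega) (by omega)]; exact congrArg p.node (Fin.ext (by simp))
    have e1 : p.toWk.f (j.val + 1) = p.inner j := by
      rw [p.toWk_f (by omega) (by omega)]; exact congrArg p.node (Fin.ext (by simp))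
    have e2 : p.toWk.f (j.val + 1 + 1) = p.node j.succ.succ := by
      rw [p.toWk_f (by omega) (by omega)]; exact congrArg p.node (Fin.ext (by simp))
    have e3 : p.toWk.d (j.val + 1 - 1) = p.dir j.castSucc := by
      rw [p.toWk_d (by omega) (by omega)]; exact congrArg p.dir (Fin.ext (by simp))
    have e4 : p.toWk.d (j.val + 1) = p.dir j.succ := by
      rw [p.toWk_d (by omega) (by omega)]; exact congrArg p.dir (Fin.ext (by simp))
    rw [e0, e1, e2, e3, e4]
    unfold GPath.isCollider at hj
    unfold sBlk
    tauto
  · rintro ⟨i, hi0, hilt, hblk⟩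
    rw [toWk_n] at hilt
    refine ⟨⟨i - 1, by omega⟩, ?_⟩
    have e0 : p.toWk.f (i-1) = p.node (⟨i-1, by omega⟩ : Fin p.k).castSucc.castSucc := by
      rw [p.toWk_f (by omega) (by omega)]; exact congrArg p.node (Fin.ext (by simp))
    have e1 : p.toWk.f i = p.inner ⟨i-1, by omega⟩ := by
      rw [p.toWk_f (by omega) (by omega)]
      exact congrArg p.node (Fin.ext (by simp [GPath.inner]; omega))
    have e2 : p.toWk.f (i+1) = p.node (⟨i-1, by omega⟩ : Fin p.k).succ.succ := by
      rw [p.toWk_f (by omega) (by omega)]; exact congrArg p.node (Fin.ext (by simp; omega))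
    have e3 : p.toWk.d (i-1) = p.dir (⟨i-1, by omega⟩ : Fin p.k).castSucc := by
      rw [p.toWk_d (by omega) (by omega)]; exact congrArg p.dir (Fin.ext (by simp))
    have e4 : p.toWk.d i = p.dir (⟨i-1, by omega⟩ : Fin p.k).succ := by
      rw [p.toWk_d (by omega) (by omega)]; exact congrArg p.dir (Fin.ext (by simp; omega))
    rw [e0, e1, e2, e3, e4] at hblk
    unfold sBlk at hblk
    unfold GPath.isCollider
    tauto

lemma dBlocked_iff (p : GPath G X Y) (S : Set V) :
    p.dBlocked S ↔ ∃ i, 0 < i ∧ i < p.toWk.n ∧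
      dBlk G S (p.toWk.f i) (p.toWk.d (i-1)) (p.toWk.d i) := by
  constructor
  · rintro ⟨j, hj⟩
    refine ⟨j.val + 1, by omega, by rw [toWk_n]; omega, ?_⟩
    have e1 : p.toWk.f (j.val + 1) = p.inner j := by
      rw [p.toWk_f (by omega) (by omega)]; exact congrArg p.node (Fin.ext (by simp))
    have e3 : p.toWk.d (j.val + 1 - 1) = p.dir j.castSucc := by
      rw [p.toWk_d (by omega) (by omega)]; exact congrArg p.dir (Fin.ext (by simp))
    have e4 : p.toWk.d (j.val + 1) = p.dir j.succ := by
      rw [p.toWk_d (by omega) (by omega)]; exact congrArg p.dir (Fin.ext (by simp))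
    rw [e1, e3, e4]
    unfold GPath.isCollider at hj
    unfold dBlk
    tauto
  · rintro ⟨i, hi0, hilt, hblk⟩
    rw [toWk_n] at hilt
    refine ⟨⟨i - 1, by omega⟩, ?_⟩
    have e1 : p.toWk.f i = p.inner ⟨i-1, by omega⟩ := by
      rw [p.toWk_f (by omega) (by omega)]
      exact congrArg p.node (Fin.ext (by simp [GPath.inner]; omega))
    have e3 : p.toWk.d (i-1) = p.dir (⟨i-1, by omega⟩ : Fin p.k).castSucc := by
      rw [p.toWk_d (by omega) (by omega)]; exact congrArg p.dir (Fin.ext (by simp))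
    have e4 : p.toWk.d i = p.dir (⟨i-1, by omega⟩ : Fin p.k).succ := by
      rw [p.toWk_d (by omega) (by omega)]; exact congrArg p.dir (Fin.ext (by simp; omega))
    rw [e1, e3, e4] at hblk
    unfold dBlk at hblk
    unfold GPath.isCollider
    tauto

end GPath

namespace Wk

/-- Convert an injective walk to a `GPath`. -/
def toPath (w : Wk G X Y)
    (hinj : ∀ i ≤ w.n, ∀ j ≤ w.n, w.f i = w.f j → i = j) : GPath G X Y where
  k := w.n - 1
  node i := w.f i.val
  dir i := w.d i.val
  inj := by
    intro a b h
    have ha : a.val ≤ w.n := by have := a.isLt; have := w.pos; omega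
    have hb : b.val ≤ w.n := by have := b.isLt; have := w.pos; omega
    exact Fin.ext (hinj a.val ha b.val hb h)
  first := w.hA
  last := by
    show w.f (w.n - 1 + 1) = Y
    have : w.n - 1 + 1 = w.n := by have := w.pos; omega
    rw [this, w.hB]
  adj i := by
    have hi : i.val < w.n := by have := i.isLt; have := w.pos; omega
    exact w.he i.val hi

lemma toPath_not_sigmaBlocked (w : Wk G X Y)
    (hinj : ∀ i ≤ w.n, ∀ j ≤ w.n, w.f i = w.f j → i = j)
    {S : Set V} (hop : w.sOpen S) : ¬ (w.toPath hinj).sigmaBlocked S := by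
  rintro ⟨j, hj⟩
  have hjlt : (j : ℕ) + 1 < w.n := by
    have h2 : (j : ℕ) < w.n - 1 := j.isLt
    have := w.pos; omega
  apply hop (j.val + 1) (by omega) hjlt
  simp only [Nat.add_sub_cancel]
  show sBlk G S ((w.toPath hinj).node j.castSucc.castSucc) ((w.toPath hinj).inner j)
    ((w.toPath hinj).node j.succ.succ) ((w.toPath hinj).dir j.castSucc)
    ((w.toPath hinj).dir j.succ)
  unfold GPath.isCollider at hj
  unfold sBlk
  tauto

lemma toPath_not_dBlocked (w : Wk G X Y)
    (hinj : ∀ i ≤ w.n, ∀ j ≤ w.n, w.f i = w.f j → i = j)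
    {S : Set V} (hop : w.dOpen S) : ¬ (w.toPath hinj).dBlocked S := by
  rintro ⟨j, hj⟩
  have hjlt : (j : ℕ) + 1 < w.n := by
    have h2 : (j : ℕ) < w.n - 1 := j.isLt
    have := w.pos; omega
  apply hop (j.val + 1) (by omega) hjlt
  simp only [Nat.add_sub_cancel]
  show dBlk G S ((w.toPath hinj).inner j) ((w.toPath hinj).dir j.castSucc)
    ((w.toPath hinj).dir j.succ)
  unfold GPath.isCollider at hj
  unfold dBlk
  tauto

end Wk

end AuxConv
section AuxSplice

variable {V : Type} {G : DiGraph V} {A B : V} {S : Set V}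

open DiGraph

namespace Wk

/-- Reachability along a segment of forward edges. -/
lemma reach_of_true_seg (w : Wk G A B) (k : ℕ) : ∀ a, a + k ≤ w.n →
    (∀ u, a ≤ u → u < a + k → w.d u = true) → G.reach (w.f a) (w.f (a + k)) := by
  induction k with
  | zero => intro a _ _; exact Relation.ReflTransGen.refl
  | succ k ih =>
    intro a hk h
    have hr := ih a (by omega) (fun u h1 h2 => h u h1 (by omega))
    have he : G.Edge (w.f (a+k)) (w.f (a+k+1)) :=
      (w.he (a+k) (by omega)).1 (h (a+k) (by omega) (by omega))
    exact Relation.ReflTransGen.tail hr he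

/-- The collider property: colliders on the walk are ancestors of `S`. -/
def CP (w : Wk G A B) (S : Set V) : Prop :=
  ∀ m, 0 < m → m < w.n → w.d (m-1) = true → w.d m = false → w.f m ∈ G.anc S

lemma sOpen.cp {w : Wk G A B} (h : w.sOpen S) : w.CP S := by
  intro m h1 h2 hd1 hd2
  by_contra hna
  exact h m h1 h2 (Or.inl ⟨hd1, hd2, hna⟩)

lemma dOpen.cp {w : Wk G A B} (h : w.dOpen S) : w.CP S := by
  intro m h1 h2 hd1 hd2
  by_contra hna
  exact h m h1 h2 (Or.inl ⟨hd1, hd2, hna⟩)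

/-- Scan forward from a forward edge to the first collider. -/
lemma anc_of_scan {w : Wk G A B} (hcp : w.CP S) {i j : ℕ} (hij : i < j) (hjn : j < w.n)
    (hdi : w.d i = true) (hdj : w.d j = false) : w.f i ∈ G.anc S := by
  classical
  have hex : ∃ m, i < m ∧ w.d m = false := ⟨j, hij, hdj⟩
  set m := Nat.find hex with hm
  obtain ⟨him, hdm⟩ : i < m ∧ w.d m = false := Nat.find_spec hex
  have hmj : m ≤ j := Nat.find_min' hex ⟨hij, hdj⟩
  have htrue : ∀ u, i ≤ u → u < m → w.d u = true := by
    intro u h1 h2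
    rcases Nat.eq_or_lt_of_le h1 with h | h
    · rw [← h]; exact hdi
    · have := Nat.find_min hex h2
      push_neg at this
      cases hu : w.d u with
      | false => exact absurd hu (this h)
      | true => rfl
  have hcol : w.f m ∈ G.anc S := by
    apply hcp m (by omega) (by omega) _ hdm
    exact htrue (m-1) (by omega) (by omega)
  have hreach : G.reach (w.f i) (w.f m) := by
    have := w.reach_of_true_seg (m - i) i (by omega)
      (fun u h1 h2 => htrue u h1 (by omega))
    have he : i + (m - i) = m := by omega
    rwa [he] at this
  exact anc_of_reach hreach hcol

/-- Splice out the loop between positions `i < j` (where `f i = f j`). -/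
def splice (w : Wk G A B) (i j : ℕ) (hij : i < j) (hjn : j ≤ w.n)
    (hf : w.f i = w.f j) (hn' : 0 < w.n - (j - i)) : Wk G A B where
  n := w.n - (j - i)
  pos := hn'
  f t := if t ≤ i then w.f t else w.f (t + (j - i))
  d t := if t < i then w.d t else w.d (t + (j - i))
  hA := by simp [w.hA]
  hB := by
    by_cases h : w.n - (j - i) ≤ i
    · have hji : j = w.n := by omega
      simp only [if_pos h]
      have : w.n - (j - i) = i := by omega
      rw [this, hf, hji, w.hB]
    · simp only [if_neg h]
      have : w.n - (j - i) + (j - i) = w.n := by omega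
      rw [this, w.hB]
  he t ht := by
    by_cases h : t < i
    · simp only [if_pos h, if_pos (by omega : t ≤ i), if_pos (by omega : t + 1 ≤ i)]
      exact w.he t (by omega)
    · simp only [if_neg h, if_neg (by omega : ¬ t + 1 ≤ i)]
      have hft : (if t ≤ i then w.f t else w.f (t + (j - i))) = w.f (t + (j - i)) := by
        by_cases h2 : t ≤ i
        · have : t = i := by omega
          subst this
          simp only [if_pos h2]
          rw [hf]; congr 1; omega
        · simp only [if_neg h2]
      rw [hft]
      have e : t + 1 + (j - i) = t + (j - i) + 1 := by omega
      rw [e]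
      exact w.he (t + (j - i)) (by omega)

lemma splice_sOpen {w : Wk G A B} {i j : ℕ} (hij : i < j) (hjn : j ≤ w.n)
    (hf : w.f i = w.f j) (hn' : 0 < w.n - (j - i)) (hop : w.sOpen S) :
    (w.splice i j hij hjn hf hn').sOpen S := by
  intro t ht0 htn
  have hn : (w.splice i j hij hjn hf hn').n = w.n - (j - i) := rfl
  rw [hn] at htn
  have hfl : ∀ u, u ≤ i → (w.splice i j hij hjn hf hn').f u = w.f u := by
    intro u hu; simp [splice, if_pos hu]
  have hfh : ∀ u, i ≤ u → (w.splice i j hij hjn hf hn').f u = w.f (u + (j - i)) := by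
    intro u hu
    by_cases h2 : u ≤ i
    · have : u = i := by omega
      subst this
      simp only [splice, if_pos h2]
      rw [hf]; congr 1; omega
    · simp [splice, if_neg h2]
  have hdl : ∀ u, u < i → (w.splice i j hij hjn hf hn').d u = w.d u := by
    intro u hu; simp [splice, if_pos hu]
  have hdh : ∀ u, i ≤ u → (w.splice i j hij hjn hf hn').d u = w.d (u + (j - i)) := by
    intro u hu; simp [splice, if_neg (by omega : ¬ u < i)]
  rcases lt_trichotomy t i with h | h | h
  · rw [hfl (t-1) (by omega), hfl t (by omega), hfl (t+1) (by omega),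
      hdl (t-1) (by omega), hdl t (by omega)]
    exact hop t ht0 (by omega)
  · -- the splice point
    subst h
    have hi0 : 0 < t := ht0
    have hjltn : j < w.n := by omega
    rw [hfl (t-1) (by omega), hfl t (by omega), hfh (t+1) (by omega),
      hdl (t-1) (by omega), hdh t (by omega)]
    have e1 : t + 1 + (j - t) = j + 1 := by omega
    have e2 : t + (j - t) = j := by omega
    rw [e1, e2]
    intro hblk
    rcases hblk with ⟨hL, hR, hv⟩ | ⟨hnc, hvS, hd⟩
    · -- collider at the splice point: show w.f t ∈ anc S
      apply hv
      by_cases hdi : w.d t = false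
      · exact hop.cp t ht0 (by omega) hL hdi
      · have hdi' : w.d t = true := by
          cases hq : w.d t with
          | false => exact absurd hq hdi
          | true => rfl
        by_cases hdj1 : w.d (j-1) = true
        · have := hop.cp j (by omega) hjltn (by rwa [] ) hR
          rw [← hf] at this
          exact this
        · have hdj1' : w.d (j-1) = false := by
            cases hq : w.d (j-1) with
            | false => rfl
            | true => exact absurd hq hdj1
          have hlt : t < j - 1 := by
            rcases Nat.lt_or_ge t (j-1) with h | h
            · exact h
            · have : j - 1 = t := by omega
              rw [this] at hdj1'
              rw [hdi'] at hdj1'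
              exact absurd hdj1' (by simp)
          exact anc_of_scan hop.cp hlt (by omega) hdi' hdj1'
    · rcases hd with ⟨hR, hsc⟩ | ⟨hL, hsc⟩
      · -- right edge out of v, leaving the scc: blocked at j in w
        apply hop j (by omega) hjltn
        refine Or.inr ⟨by simp [hR], by rwa [← hf], Or.inl ⟨hR, by rwa [← hf]⟩⟩
      · -- left edge out of v, leaving the scc: blocked at t in w
        apply hop t ht0 (by omega)
        refine Or.inr ⟨by simp [hL], hvS, Or.inr ⟨hL, hsc⟩⟩
  · rw [hfh (t-1) (by omega), hfh t (by omega), hfh (t+1) (by omega),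
      hdh (t-1) (by omega), hdh t (by omega)]
    have e1 : t - 1 + (j - i) = t + (j - i) - 1 := by omega
    have e2 : t + 1 + (j - i) = t + (j - i) + 1 := by omega
    rw [e1, e2]
    exact hop (t + (j - i)) (by omega) (by omega)

lemma splice_dOpen {w : Wk G A B} {i j : ℕ} (hij : i < j) (hjn : j ≤ w.n)
    (hf : w.f i = w.f j) (hn' : 0 < w.n - (j - i)) (hop : w.dOpen S) :
    (w.splice i j hij hjn hf hn').dOpen S := by
  intro t ht0 htn
  have hn : (w.splice i j hij hjn hf hn').n = w.n - (j - i) := rfl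
  rw [hn] at htn
  have hfl : ∀ u, u ≤ i → (w.splice i j hij hjn hf hn').f u = w.f u := by
    intro u hu; simp [splice, if_pos hu]
  have hfh : ∀ u, i ≤ u → (w.splice i j hij hjn hf hn').f u = w.f (u + (j - i)) := by
    intro u hu
    by_cases h2 : u ≤ i
    · have : u = i := by omega
      subst this
      simp only [splice, if_pos h2]
      rw [hf]; congr 1; omega
    · simp [splice, if_neg h2]
  have hdl : ∀ u, u < i → (w.splice i j hij hjn hf hn').d u = w.d u := by
    intro u hu; simp [splice, if_pos hu]
  have hdh : ∀ u, i ≤ u → (w.splice i j hij hjn hf hn').d u = w.d (u + (j - i)) := by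
    intro u hu; simp [splice, if_neg (by omega : ¬ u < i)]
  rcases lt_trichotomy t i with h | h | h
  · rw [hfl t (by omega), hdl (t-1) (by omega), hdl t (by omega)]
    exact hop t ht0 (by omega)
  · subst h
    have hjltn : j < w.n := by omega
    rw [hfl t (by omega), hdl (t-1) (by omega), hdh t (by omega)]
    have e2 : t + (j - t) = j := by omega
    rw [e2]
    intro hblk
    rcases hblk with ⟨hL, hR, hv⟩ | ⟨hnc, hvS⟩
    · apply hv
      by_cases hdi : w.d t = false
      · exact hop.cp t ht0 (by omega) hL hdi
      · have hdi' : w.d t = true := by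
          cases hq : w.d t with
          | false => exact absurd hq hdi
          | true => rfl
        by_cases hdj1 : w.d (j-1) = true
        · have := hop.cp j (by omega) hjltn hdj1 hR
          rw [← hf] at this
          exact this
        · have hdj1' : w.d (j-1) = false := by
            cases hq : w.d (j-1) with
            | false => rfl
            | true => exact absurd hq hdj1
          have hlt : t < j - 1 := by
            rcases Nat.lt_or_ge t (j-1) with h | h
            · exact h
            · have : j - 1 = t := by omega
              rw [this, hdi'] at hdj1'
              exact absurd hdj1' (by simp)
          exact anc_of_scan hop.cp hlt (by omega) hdi' hdj1'
    · -- non-collider at splice point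
      by_cases hL : w.d (t-1) = true
      · -- then the right edge must not be false-into: d j = true
        have hR : w.d j = true := by
          cases hq : w.d j with
          | false => exact absurd ⟨hL, hq⟩ hnc
          | true => rfl
        apply hop j (by omega) hjltn
        exact Or.inr ⟨by simp [hR], by rwa [← hf]⟩
      · apply hop t ht0 (by omega)
        exact Or.inr ⟨by simp [hL], hvS⟩
  · rw [hfh t (by omega), hdh (t-1) (by omega), hdh t (by omega)]
    have e1 : t - 1 + (j - i) = t + (j - i) - 1 := by omega
    rw [e1]
    exact hop (t + (j - i)) (by omega) (by omega)

/-- From an open walk extract an injective open walk (σ-version). -/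
lemma exists_inj_of_sOpen_aux (hAB : A ≠ B) : ∀ N (w : Wk G A B), w.n ≤ N → w.sOpen S →
    ∃ w : Wk G A B, w.sOpen S ∧ ∀ i ≤ w.n, ∀ j ≤ w.n, w.f i = w.f j → i = j := by
  intro N
  induction N with
  | zero => intro w hw _; exact absurd w.pos (by omega)
  | succ N ih =>
    intro w hwn hw
    by_cases hinj : ∀ i ≤ w.n, ∀ j ≤ w.n, w.f i = w.f j → i = j
    · exact ⟨w, hw, hinj⟩
    · push_neg at hinj
      obtain ⟨i, hi, j, hj, hfij, hne⟩ := hinj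
      obtain ⟨i, j, hij, hi, hj, hfij⟩ : ∃ i j, i < j ∧ i ≤ w.n ∧ j ≤ w.n ∧ w.f i = w.f j := by
        rcases Nat.lt_or_ge i j with h | h
        · exact ⟨i, j, h, hi, hj, hfij⟩
        · exact ⟨j, i, by omega, hj, hi, hfij.symm⟩
      have hn' : 0 < w.n - (j - i) := by
        rcases Nat.eq_zero_or_pos (w.n - (j - i)) with h | h
        · exfalso
          have hi0 : i = 0 := by omega
          have hjn : j = w.n := by omega
          have hAB' : w.f 0 = w.f w.n := by rw [← hi0, ← hjn]; exact hfij
          exact hAB ((w.hA.symm.trans hAB').trans w.hB)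
        · exact h
      refine ih (w.splice i j hij hj hfij hn') ?_ (splice_sOpen hij hj hfij hn' hw)
      show w.n - (j - i) ≤ N
      omega

lemma exists_inj_of_sOpen (hAB : A ≠ B) (h : ∃ w : Wk G A B, w.sOpen S) :
    ∃ w : Wk G A B, w.sOpen S ∧ ∀ i ≤ w.n, ∀ j ≤ w.n, w.f i = w.f j → i = j := by
  obtain ⟨w, hw⟩ := h
  exact exists_inj_of_sOpen_aux hAB w.n w (le_refl _) hw

/-- From an open walk extract an injective open walk (d-version). -/
lemma exists_inj_of_dOpen_aux (hAB : A ≠ B) : ∀ N (w : Wk G A B), w.n ≤ N → w.dOpen S →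
    ∃ w : Wk G A B, w.dOpen S ∧ ∀ i ≤ w.n, ∀ j ≤ w.n, w.f i = w.f j → i = j := by
  intro N
  induction N with
  | zero => intro w hw _; exact absurd w.pos (by omega)
  | succ N ih =>
    intro w hwn hw
    by_cases hinj : ∀ i ≤ w.n, ∀ j ≤ w.n, w.f i = w.f j → i = j
    · exact ⟨w, hw, hinj⟩
    · push_neg at hinj
      obtain ⟨i, hi, j, hj, hfij, hne⟩ := hinj
      obtain ⟨i, j, hij, hi, hj, hfij⟩ : ∃ i j, i < j ∧ i ≤ w.n ∧ j ≤ w.n ∧ w.f i = w.f j := by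
        rcases Nat.lt_or_ge i j with h | h
        · exact ⟨i, j, h, hi, hj, hfij⟩
        · exact ⟨j, i, by omega, hj, hi, hfij.symm⟩
      have hn' : 0 < w.n - (j - i) := by
        rcases Nat.eq_zero_or_pos (w.n - (j - i)) with h | h
        · exfalso
          have hi0 : i = 0 := by omega
          have hjn : j = w.n := by omega
          have hAB' : w.f 0 = w.f w.n := by rw [← hi0, ← hjn]; exact hfij
          exact hAB ((w.hA.symm.trans hAB').trans w.hB)
        · exact h
      refine ih (w.splice i j hij hj hfij hn') ?_ (splice_dOpen hij hj hfij hn' hw)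
      show w.n - (j - i) ≤ N
      omega

lemma exists_inj_of_dOpen (hAB : A ≠ B) (h : ∃ w : Wk G A B, w.dOpen S) :
    ∃ w : Wk G A B, w.dOpen S ∧ ∀ i ≤ w.n, ∀ j ≤ w.n, w.f i = w.f j → i = j := by
  obtain ⟨w, hw⟩ := h
  exact exists_inj_of_dOpen_aux hAB w.n w (le_refl _) hw

end Wk

end AuxSplice
section AuxAcy

variable {V : Type} {G Ga : DiGraph V} {S : Set V}

open DiGraph

lemma acy_edge_reach (hGa : IsAcyclification G Ga) {u v : V} (h : Ga.Edge u v) :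
    G.reach u v := by
  by_cases hscc : u ∈ G.scc v
  · exact hscc.2
  · have hne : u ≠ v := by rintro rfl; exact hscc (G.mem_scc_self u)
    obtain ⟨W, hW, hE⟩ := (hGa.2.1 u v hne hscc).mp h
    exact Relation.ReflTransGen.head hE hW.2

lemma acy_reach (hGa : IsAcyclification G Ga) {u v : V} (h : Ga.reach u v) :
    G.reach u v := by
  induction h with
  | refl => exact Relation.ReflTransGen.refl
  | tail _ he ih => exact reach_trans ih (acy_edge_reach hGa he)

lemma acy_anc_sub (hGa : IsAcyclification G Ga) : Ga.anc S ⊆ G.anc S := by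
  rintro x ⟨s, hs, hr⟩
  exact ⟨s, hs, acy_reach hGa hr⟩

/-- Cross-SCC edges in the acyclification (flexible head). -/
lemma acy_edge_of_cross (hGa : IsAcyclification G Ga) {u c w' : V}
    (hu : u ∉ G.scc c) (hw : w' ∈ G.scc c) (he : G.Edge u w') : Ga.Edge u c := by
  have hne : u ≠ c := by rintro rfl; exact hu (G.mem_scc_self u)
  exact (hGa.2.1 u c hne hu).mpr ⟨w', hw, he⟩

/-- Tournament edges inside an SCC. -/
lemma acy_tourn (hGa : IsAcyclification G Ga) {a b : V} (hab : a ∈ G.scc b) (hne : a ≠ b) :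
    Ga.Edge a b ∨ Ga.Edge b a := by
  rcases hGa.2.2 a b hne hab with ⟨h, _⟩ | ⟨h, _⟩
  · exact Or.inl h
  · exact Or.inr h

/-- Every SCC has a source node in the acyclification. -/
lemma acy_source [Fintype V] (hGa : IsAcyclification G Ga) (z : V) :
    ∃ M ∈ G.scc z, ∀ c ∈ G.scc z, c ≠ M → Ga.Edge M c := by
  have hirr : IsIrrefl V (Relation.TransGen Ga.Edge) := ⟨fun a => hGa.1 a⟩
  have htr : IsTrans V (Relation.TransGen Ga.Edge) := ⟨fun _ _ _ => Relation.TransGen.trans⟩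
  have hwf : WellFounded (Relation.TransGen Ga.Edge) :=
    Finite.wellFounded_of_trans_of_irrefl _
  obtain ⟨M, hM, hmin⟩ := hwf.has_min (G.scc z) ⟨z, G.mem_scc_self z⟩
  refine ⟨M, hM, fun c hc hne => ?_⟩
  have hcM : c ∈ G.scc M := mem_scc_trans hc (scc_symm hM)
  rcases acy_tourn hGa hcM hne with h | h
  · exact absurd (Relation.TransGen.single h) (hmin c hc)
  · exact h

/-- Key transfer: ancestors of `S` in `G` give `Ga`-ancestry for SCC sources. -/
lemma acy_source_anc [Fintype V] (hGa : IsAcyclification G Ga) {z : V}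
    (hz : z ∈ G.anc S) :
    ∀ M ∈ G.scc z, (∀ c ∈ G.scc z, c ≠ M → Ga.Edge M c) → M ∈ Ga.anc S := by
  obtain ⟨s, hs, hr⟩ := hz
  induction hr using Relation.ReflTransGen.head_induction_on with
  | refl =>
    intro M hM hsrc
    by_cases hMs : M = s
    · exact hMs ▸ mem_anc_of_mem hs
    · have := hsrc s (G.mem_scc_self s) (fun h => hMs h.symm)
      exact anc_of_reach (Relation.ReflTransGen.single this) (mem_anc_of_mem hs)
  | head hab hbs ih =>
    rename_i a b
    intro M hM hsrc
    by_cases hb : b ∈ G.scc a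
    · have hba : a ∈ G.scc b := scc_symm hb
      refine ih M (mem_scc_trans hM hba) ?_
      intro c hc hne
      exact hsrc c (by rwa [← scc_eq hb]) hne
    · obtain ⟨Mb, hMb, hsrcb⟩ := acy_source hGa b
      have hMbanc : Mb ∈ Ga.anc S := ih Mb hMb hsrcb
      have haMb : Ga.Edge a Mb := by
        apply acy_edge_of_cross hGa _ (scc_symm hMb) hab
        intro haMb
        exact hb (scc_symm (mem_scc_trans haMb hMb))
      have haanc : a ∈ Ga.anc S :=
        anc_of_reach (Relation.ReflTransGen.single haMb) hMbanc
      by_cases hMa : M = a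
      · exact hMa ▸ haanc
      · have := hsrc a (G.mem_scc_self a) (fun h => hMa h.symm)
        exact anc_of_reach (Relation.ReflTransGen.single this) haanc

end AuxAcy
section AuxWalkOps

variable {V : Type} {G Ga : DiGraph V} {S : Set V} {A B J : V}

open DiGraph

namespace Wk

/-- Single forward edge walk. -/
def fwd (G : DiGraph V) {A B : V} (h : G.Edge A B) : Wk G A B where
  n := 1
  pos := one_pos
  f t := if t = 0 then A else B
  d _ := true
  hA := rfl
  hB := rfl
  he i hi := by
    have : i = 0 := by omega
    subst this
    exact ⟨fun _ => h, fun hc => by simp at hc⟩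

/-- Single backward edge walk. -/
def bwd (G : DiGraph V) {A B : V} (h : G.Edge B A) : Wk G A B where
  n := 1
  pos := one_pos
  f t := if t = 0 then A else B
  d _ := false
  hA := rfl
  hB := rfl
  he i hi := by
    have : i = 0 := by omega
    subst this
    exact ⟨fun hc => by simp at hc, fun _ => h⟩

@[simp] lemma fwd_n (h : G.Edge A B) : (fwd G h).n = 1 := rfl
@[simp] lemma fwd_d (h : G.Edge A B) (t : ℕ) : (fwd G h).d t = true := rfl
@[simp] lemma bwd_n (h : G.Edge B A) : (bwd G h).n = 1 := rfl
@[simp] lemma bwd_d (h : G.Edge B A) (t : ℕ) : (bwd G h).d t = false := rfl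
lemma fwd_f1 (h : G.Edge A B) : (fwd G h).f 1 = B := rfl
lemma bwd_f1 (h : G.Edge B A) : (bwd G h).f 1 = B := rfl

lemma fwd_sOpen (h : G.Edge A B) : (fwd G h).sOpen S := by
  intro i h1 h2; simp only [fwd_n] at h2; omega

lemma bwd_sOpen (h : G.Edge B A) : (bwd G h).sOpen S := by
  intro i h1 h2; simp only [bwd_n] at h2; omega

lemma fwd_dOpen (h : G.Edge A B) : (fwd G h).dOpen S := by
  intro i h1 h2; simp only [fwd_n] at h2; omega

lemma bwd_dOpen (h : G.Edge B A) : (bwd G h).dOpen S := by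
  intro i h1 h2; simp only [bwd_n] at h2; omega

/-- Concatenation of walks. -/
def append (w1 : Wk G A J) (w2 : Wk G J B) : Wk G A B where
  n := w1.n + w2.n
  pos := by have := w1.pos; omega
  f t := if t ≤ w1.n then w1.f t else w2.f (t - w1.n)
  d t := if t < w1.n then w1.d t else w2.d (t - w1.n)
  hA := by simp [w1.hA]
  hB := by
    have h2 := w2.pos
    simp only [if_neg (by omega : ¬ w1.n + w2.n ≤ w1.n)]
    have : w1.n + w2.n - w1.n = w2.n := by omega
    rw [this, w2.hB]
  he i hi := by
    by_cases h : i < w1.n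
    · simp only [if_pos h, if_pos (by omega : i ≤ w1.n), if_pos (by omega : i + 1 ≤ w1.n)]
      exact w1.he i h
    · simp only [if_neg h, if_neg (by omega : ¬ i + 1 ≤ w1.n)]
      have hf : (if i ≤ w1.n then w1.f i else w2.f (i - w1.n)) = w2.f (i - w1.n) := by
        by_cases h2 : i ≤ w1.n
        · have : i = w1.n := by omega
          subst this
          simp only [if_pos h2]
          rw [w1.hB]
          have : w1.n - w1.n = 0 := by omega
          rw [this, w2.hA]
        · simp only [if_neg h2]
      rw [hf]
      have e : i + 1 - w1.n = i - w1.n + 1 := by omega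
      rw [e]
      exact w2.he (i - w1.n) (by omega)

lemma append_n (w1 : Wk G A J) (w2 : Wk G J B) : (append w1 w2).n = w1.n + w2.n := rfl

lemma append_f_low (w1 : Wk G A J) (w2 : Wk G J B) {t : ℕ} (h : t ≤ w1.n) :
    (append w1 w2).f t = w1.f t := by simp [append, if_pos h]

lemma append_f_high (w1 : Wk G A J) (w2 : Wk G J B) {t : ℕ} (h : w1.n ≤ t) :
    (append w1 w2).f t = w2.f (t - w1.n) := by
  by_cases h2 : t ≤ w1.n
  · have : t = w1.n := by omega
    subst this
    simp only [append, if_pos h2]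
    rw [w1.hB]
    have : w1.n - w1.n = 0 := by omega
    rw [this, w2.hA]
  · simp [append, if_neg h2]

lemma append_d_low (w1 : Wk G A J) (w2 : Wk G J B) {t : ℕ} (h : t < w1.n) :
    (append w1 w2).d t = w1.d t := by simp [append, if_pos h]

lemma append_d_high (w1 : Wk G A J) (w2 : Wk G J B) {t : ℕ} (h : w1.n ≤ t) :
    (append w1 w2).d t = w2.d (t - w1.n) := by
  simp [append, if_neg (by omega : ¬ t < w1.n)]

/-- Appending σ-open walks with an unblocked junction. -/
lemma sOpen_append {w1 : Wk G A J} {w2 : Wk G J B} (h1 : w1.sOpen S) (h2 : w2.sOpen S)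
    (hj : ¬ sBlk G S (w1.f (w1.n - 1)) J (w2.f 1) (w1.d (w1.n - 1)) (w2.d 0)) :
    (append w1 w2).sOpen S := by
  intro t ht0 htn
  rw [append_n] at htn
  rcases lt_trichotomy t w1.n with h | h | h
  · rw [append_f_low _ _ (by omega), append_f_low _ _ (by omega),
      append_f_low _ _ (by omega : t + 1 ≤ w1.n),
      append_d_low _ _ (by omega), append_d_low _ _ (by omega)]
    exact h1 t ht0 h
  · subst h
    have hp := w1.pos
    rw [append_f_low _ _ (by omega), append_f_low _ _ (by omega),
      append_f_high _ _ (by omega), append_d_low _ _ (by omega),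
      append_d_high _ _ (by omega)]
    have e1 : w1.n + 1 - w1.n = 1 := by omega
    have e2 : w1.n - w1.n = 0 := by omega
    rw [e1, e2, w1.hB]
    exact hj
  · rw [append_f_high _ _ (by omega), append_f_high _ _ (by omega),
      append_f_high _ _ (by omega), append_d_high _ _ (by omega),
      append_d_high _ _ (by omega)]
    have e1 : t - 1 - w1.n = t - w1.n - 1 := by omega
    have e2 : t + 1 - w1.n = t - w1.n + 1 := by omega
    rw [e1, e2]
    exact h2 (t - w1.n) (by omega) (by omega)

/-- Appending d-open walks with an unblocked junction. -/
lemma dOpen_append {w1 : Wk G A J} {w2 : Wk G J B} (h1 : w1.dOpen S) (h2 : w2.dOpen S)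
    (hj : ¬ dBlk G S J (w1.d (w1.n - 1)) (w2.d 0)) :
    (append w1 w2).dOpen S := by
  intro t ht0 htn
  rw [append_n] at htn
  rcases lt_trichotomy t w1.n with h | h | h
  · rw [append_f_low _ _ (by omega),
      append_d_low _ _ (by omega), append_d_low _ _ (by omega)]
    exact h1 t ht0 h
  · subst h
    have hp := w1.pos
    rw [append_f_low _ _ (by omega), append_d_low _ _ (by omega),
      append_d_high _ _ (by omega)]
    have e2 : w1.n - w1.n = 0 := by omega
    rw [e2, w1.hB]
    exact hj
  · rw [append_f_high _ _ (by omega), append_d_high _ _ (by omega),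
      append_d_high _ _ (by omega)]
    have e1 : t - 1 - w1.n = t - w1.n - 1 := by omega
    rw [e1]
    exact h2 (t - w1.n) (by omega) (by omega)

/-- Reversal of a walk. -/
def reverse (w : Wk G A B) : Wk G B A where
  n := w.n
  pos := w.pos
  f t := w.f (w.n - t)
  d t := !(w.d (w.n - 1 - t))
  hA := by simp [w.hB]
  hB := by
    show w.f (w.n - w.n) = A
    have : w.n - w.n = 0 := by omega
    rw [this, w.hA]
  he i hi := by
    have e : w.n - i = w.n - 1 - i + 1 := by omega
    rw [e]
    have hlt : w.n - 1 - i < w.n := by omega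
    constructor
    · intro hd
      have : w.d (w.n - 1 - i) = false := by
        cases hq : w.d (w.n - 1 - i) with
        | false => rfl
        | true => rw [hq] at hd; simp at hd
      have he2 := (w.he _ hlt).2 this
      have e2 : w.n - (i+1) = w.n - 1 - i := by omega
      rw [e2]
      exact he2
    · intro hd
      have : w.d (w.n - 1 - i) = true := by
        cases hq : w.d (w.n - 1 - i) with
        | false => rw [hq] at hd; simp at hd
        | true => rfl
      have he2 := (w.he _ hlt).1 this
      have e2 : w.n - (i+1) = w.n - 1 - i := by omega
      rw [e2]
      exact he2

lemma reverse_n (w : Wk G A B) : (reverse w).n = w.n := rfl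
lemma reverse_f (w : Wk G A B) (t : ℕ) : (reverse w).f t = w.f (w.n - t) := rfl
lemma reverse_d (w : Wk G A B) (t : ℕ) : (reverse w).d t = !(w.d (w.n - 1 - t)) := rfl

end Wk

end AuxWalkOps
section AuxExpand

variable {V : Type} {G Ga : DiGraph V} {S : Set V}

open DiGraph Wk

/-- A directed (all-forward) walk realizing a `TransGen` derivation. -/
lemma chain_of_transGen {u w : V} (h : Relation.TransGen G.Edge u w) :
    ∃ wk : Wk G u w, (∀ i < wk.n, wk.d i = true) ∧
      (∀ i, 0 < i → i ≤ wk.n → G.reach (wk.f i) w ∧ G.reach u (wk.f i)) := by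
  induction h using Relation.TransGen.head_induction_on with
  | single h =>
    rename_i a
    refine ⟨fwd G h, fun i _ => rfl, fun i h1 h2 => ?_⟩
    have : i = 1 := by have : (fwd G h).n = 1 := rfl; omega
    subst this
    rw [fwd_f1]
    exact ⟨Relation.ReflTransGen.refl, Relation.ReflTransGen.single h⟩
  | head h' hcw ih =>
    rename_i a c
    obtain ⟨wkc, hdt, hr⟩ := ih
    refine ⟨append (fwd G h') wkc, ?_, ?_⟩
    · intro i hi
      rw [append_n, fwd_n] at hi
      by_cases h2 : i < 1
      · rw [append_d_low _ _ (by rw [fwd_n]; omega)]; rfl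
      · rw [append_d_high _ _ (by rw [fwd_n]; omega), fwd_n]
        exact hdt _ (by omega)
    · intro i h1 h2
      rw [append_n, fwd_n] at h2
      rw [append_f_high _ _ (by rw [fwd_n]; omega), fwd_n]
      by_cases h3 : i - 1 = 0
      · rw [h3, wkc.hA]
        exact ⟨hcw.to_reflTransGen, Relation.ReflTransGen.single h'⟩
      · obtain ⟨r1, r2⟩ := hr (i-1) (by omega) (by omega)
        exact ⟨r1, Relation.ReflTransGen.head h' r2⟩

/-- Expand an acyclification edge into a directed walk of `G` whose interior
nodes all lie in the SCC of the target. -/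
lemma exists_dir_walk (hGa : IsAcyclification G Ga) {u w : V} (h : Ga.Edge u w) :
    ∃ wk : Wk G u w, (∀ i < wk.n, wk.d i = true) ∧
      (∀ i, 0 < i → i ≤ wk.n → wk.f i ∈ G.scc w) := by
  have hne : u ≠ w := by rintro rfl; exact Ga.loopless u h
  by_cases hscc : u ∈ G.scc w
  · have hreach : G.reach u w := hscc.2
    rcases Relation.ReflTransGen.cases_head hreach with heq | ⟨c, hc, hr⟩
    · exact absurd heq hne
    · have htg : Relation.TransGen G.Edge u w := Relation.TransGen.head' hc hr
      obtain ⟨wk, hdt, hprops⟩ := chain_of_transGen htg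
      refine ⟨wk, hdt, fun i h1 h2 => ?_⟩
      obtain ⟨r1, r2⟩ := hprops i h1 h2
      exact ⟨reach_trans hscc.1 r2, r1⟩
  · obtain ⟨W, hW, hE⟩ := (hGa.2.1 u w hne hscc).mp h
    by_cases hWw : W = w
    · subst hWw
      refine ⟨fwd G hE, fun i _ => rfl, fun i h1 h2 => ?_⟩
      have : i = 1 := by have : (fwd G hE).n = 1 := rfl; omega
      subst this
      rw [fwd_f1]
      exact G.mem_scc_self W
    · have htg : Relation.TransGen G.Edge W w := by
        rcases Relation.ReflTransGen.cases_head hW.2 with heq | ⟨c, hc, hr⟩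
        · exact absurd heq hWw
        · exact Relation.TransGen.head' hc hr
      obtain ⟨wkc, hdt, hprops⟩ := chain_of_transGen htg
      refine ⟨append (fwd G hE) wkc, ?_, ?_⟩
      · intro i hi
        rw [append_n, fwd_n] at hi
        by_cases h2 : i < 1
        · rw [append_d_low _ _ (by rw [fwd_n]; omega)]; rfl
        · rw [append_d_high _ _ (by rw [fwd_n]; omega), fwd_n]
          exact hdt _ (by omega)
      · intro i h1 h2
        rw [append_n, fwd_n] at h2
        rw [append_f_high _ _ (by rw [fwd_n]; omega), fwd_n]
        by_cases h3 : i - 1 = 0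
        · rw [h3, wkc.hA]
          exact hW
        · obtain ⟨r1, r2⟩ := hprops (i-1) (by omega) (by omega)
          exact ⟨reach_trans hW.1 r2, r1⟩

/-- An all-forward walk with interior nodes in the SCC of the target is σ-open. -/
lemma allTrue_sOpen {A B : V} {w : Wk G A B} (hd : ∀ i < w.n, w.d i = true)
    (hscc : ∀ i, 0 < i → i ≤ w.n → w.f i ∈ G.scc B) : w.sOpen S := by
  intro t h0 hn
  rintro (⟨hdl, hdr, _⟩ | ⟨hnc, hS, (⟨hdr, hsc⟩ | ⟨hdl, hsc⟩)⟩)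
  · rw [hd t hn] at hdr; simp at hdr
  · exact hsc (mem_scc_trans (hscc (t+1) (by omega) (by omega))
      (scc_symm (hscc t (by omega) (by omega))))
  · rw [hd (t-1) (by omega)] at hdl; simp at hdl

/-- Reverse of an all-forward walk with interior nodes in the SCC of its target
is σ-open. -/
lemma rev_allTrue_sOpen {A B : V} {w : Wk G B A} (hd : ∀ i < w.n, w.d i = true)
    (hscc : ∀ i, 0 < i → i ≤ w.n → w.f i ∈ G.scc A) : (reverse w).sOpen S := by
  intro t h0 hn
  rw [reverse_n] at hn
  rw [reverse_f, reverse_f, reverse_d, reverse_d]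
  rintro (⟨hdl, hdr, _⟩ | ⟨hnc, hS, (⟨hdr, hsc⟩ | ⟨hdl, hsc⟩)⟩)
  · rw [hd (w.n - 1 - (t-1)) (by omega)] at hdl; simp at hdl
  · rw [hd (w.n - 1 - t) (by omega)] at hdr; simp at hdr
  · apply hsc
    exact mem_scc_trans (hscc (w.n - (t-1)) (by omega) (by omega))
      (scc_symm (hscc (w.n - t) (by omega) (by omega)))

namespace Wk

/-- Tail of a walk (drop the first edge). -/
def tail {A B : V} (w : Wk G A B) (h : 1 < w.n) : Wk G (w.f 1) B where
  n := w.n - 1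
  pos := by omega
  f t := w.f (t+1)
  d t := w.d (t+1)
  hA := rfl
  hB := by
    show w.f (w.n - 1 + 1) = B
    rw [show w.n - 1 + 1 = w.n by omega, w.hB]
  he i hi := by
    exact w.he (i+1) (by omega)

lemma tail_n {A B : V} (w : Wk G A B) (h : 1 < w.n) : (w.tail h).n = w.n - 1 := rfl
lemma tail_f {A B : V} (w : Wk G A B) (h : 1 < w.n) (t : ℕ) : (w.tail h).f t = w.f (t+1) := rfl
lemma tail_d {A B : V} (w : Wk G A B) (h : 1 < w.n) (t : ℕ) : (w.tail h).d t = w.d (t+1) := rfl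

lemma tail_dOpen {A B : V} {w : Wk G A B} (h : 1 < w.n) (hop : w.dOpen S) :
    (w.tail h).dOpen S := by
  intro t h0 hn
  rw [tail_n] at hn
  rw [tail_f, tail_d, tail_d]
  have := hop (t+1) (by omega) (by omega)
  rw [show t + 1 - 1 = t by omega] at this
  rw [show t - 1 + 1 = t by omega]
  exact this

lemma tail_sOpen {A B : V} {w : Wk G A B} (h : 1 < w.n) (hop : w.sOpen S) :
    (w.tail h).sOpen S := by
  intro t h0 hn
  rw [tail_n] at hn
  rw [tail_f, tail_f, tail_f, tail_d, tail_d]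
  have := hop (t+1) (by omega) (by omega)
  rw [show t + 1 - 1 = t by omega] at this
  rw [show t - 1 + 1 = t by omega]
  exact this

end Wk

/-- Main transfer: a d-open walk in the acyclification yields a σ-open walk in `G`,
with the same first-edge orientation. -/
lemma ga_to_g (hGa : IsAcyclification G Ga) :
    ∀ N (X Y2 : V) (ρ : Wk Ga X Y2), ρ.n ≤ N → ρ.dOpen S →
    ∃ π : Wk G X Y2, π.sOpen S ∧ π.d 0 = ρ.d 0 := by
  intro N
  induction N with
  | zero => intro X Y2 ρ hn _; exact absurd ρ.pos (by omega)
  | succ N ih =>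
    intro X Y2 ρ hn hop
    by_cases h1 : ρ.n = 1
    · cases hq : ρ.d 0 with
      | true =>
        have hE : Ga.Edge X Y2 := by
          have := (ρ.he 0 (by omega)).1 hq
          rwa [ρ.hA, show (0:ℕ)+1 = ρ.n by omega, ρ.hB] at this
        obtain ⟨wk, hdt, hscc⟩ := exists_dir_walk hGa hE
        exact ⟨wk, allTrue_sOpen hdt hscc, hdt 0 wk.pos⟩
      | false =>
        have hE : Ga.Edge Y2 X := by
          have := (ρ.he 0 (by omega)).2 hq
          rwa [ρ.hA, show (0:ℕ)+1 = ρ.n by omega, ρ.hB] at this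
        obtain ⟨wk, hdt, hscc⟩ := exists_dir_walk hGa hE
        refine ⟨reverse wk, rev_allTrue_sOpen hdt hscc, ?_⟩
        rw [reverse_d, hdt (wk.n - 1 - 0) (by have := wk.pos; omega)]
        rfl
    · have h2 : 1 < ρ.n := by have := ρ.pos; omega
      obtain ⟨π', hπ', hd'⟩ := ih (ρ.f 1) Y2 (ρ.tail h2)
        (by rw [tail_n]; omega) (tail_dOpen h2 hop)
      have hd'' : π'.d 0 = ρ.d 1 := by rw [hd', tail_d]
      cases hq : ρ.d 0 with
      | true =>
        have hE : Ga.Edge X (ρ.f 1) := by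
          have := (ρ.he 0 (by omega)).1 hq
          rwa [ρ.hA] at this
        obtain ⟨wk, hdt, hscc⟩ := exists_dir_walk hGa hE
        refine ⟨append wk π', sOpen_append (allTrue_sOpen hdt hscc) hπ' ?_, ?_⟩
        · have hdl : wk.d (wk.n - 1) = true := hdt _ (by have := wk.pos; omega)
          rw [hdl, hd'']
          rintro (⟨_, hdr, hna⟩ | ⟨hnc, hS, _⟩)
          · apply hna
            have hanc : ρ.f 1 ∈ Ga.anc S := by
              by_contra hna2
              exact hop 1 (by omega) (by omega)
                (Or.inl ⟨by rw [show (1:ℕ)-1 = 0 by omega]; exact hq, hdr, hna2⟩)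
            exact acy_anc_sub hGa hanc
          · apply hop 1 (by omega) (by omega)
            refine Or.inr ⟨?_, hS⟩
            rw [show (1:ℕ)-1 = 0 by omega, hq]
            intro ⟨_, hfalse⟩
            exact hnc ⟨rfl, hfalse⟩
        · rw [append_d_low _ _ wk.pos]
          exact hdt 0 wk.pos
      | false =>
        have hE : Ga.Edge (ρ.f 1) X := by
          have := (ρ.he 0 (by omega)).2 hq
          rwa [ρ.hA] at this
        obtain ⟨wk, hdt, hscc⟩ := exists_dir_walk hGa hE
        refine ⟨append (reverse wk) π', sOpen_append (rev_allTrue_sOpen hdt hscc) hπ' ?_, ?_⟩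
        · have hdl : (reverse wk).d (wk.n - 1) = false := by
            rw [reverse_d, hdt (wk.n - 1 - (wk.n - 1)) (by have := wk.pos; omega)]
            rfl
          show ¬ sBlk G S (wk.reverse.f (wk.n - 1)) (ρ.f 1) (π'.f 1)
            (wk.reverse.d (wk.n - 1)) (π'.d 0)
          rw [hdl]
          have hS1 : ρ.f 1 ∉ S := by
            intro hS
            apply hop 1 (by omega) (by omega)
            refine Or.inr ⟨?_, hS⟩
            rw [show (1:ℕ)-1 = 0 by omega, hq]
            rintro ⟨hfalse, _⟩
            simp at hfalse
          rintro (⟨hdl', _, _⟩ | ⟨_, hS, _⟩)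
          · simp at hdl'
          · exact hS1 hS
        · rw [append_d_low _ _ (by rw [reverse_n]; exact wk.pos), reverse_d,
            hdt (wk.n - 1 - 0) (by have := wk.pos; omega)]
          rfl

end AuxExpand
section AuxMain

variable {V : Type} {G Ga : DiGraph V} {S : Set V}

open DiGraph Wk

namespace Wk

/-- Drop the first `m` edges of a walk. -/
def drop {A B : V} (w : Wk G A B) (m : ℕ) (h : m < w.n) : Wk G (w.f m) B where
  n := w.n - m
  pos := by omega
  f t := w.f (t + m)
  d t := w.d (t + m)
  hA := by show w.f (0 + m) = w.f m; rw [Nat.zero_add]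
  hB := by
    show w.f (w.n - m + m) = B
    rw [show w.n - m + m = w.n by omega, w.hB]
  he i hi := by
    rw [show i + 1 + m = i + m + 1 by omega]
    exact w.he (i + m) (by omega)

lemma drop_n {A B : V} (w : Wk G A B) (m : ℕ) (h : m < w.n) : (w.drop m h).n = w.n - m := rfl
lemma drop_f {A B : V} (w : Wk G A B) (m : ℕ) (h : m < w.n) (t : ℕ) :
    (w.drop m h).f t = w.f (t + m) := rfl
lemma drop_d {A B : V} (w : Wk G A B) (m : ℕ) (h : m < w.n) (t : ℕ) :
    (w.drop m h).d t = w.d (t + m) := rfl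

lemma drop_sOpen {A B : V} {w : Wk G A B} {m : ℕ} (h : m < w.n) (hop : w.sOpen S) :
    (w.drop m h).sOpen S := by
  intro t h0 hn
  rw [drop_n] at hn
  rw [drop_f, drop_f, drop_f, drop_d, drop_d]
  rw [show t - 1 + m = t + m - 1 by omega, show t + 1 + m = t + m + 1 by omega]
  exact hop (t + m) (by omega) (by omega)

end Wk

lemma not_dBlk_right_true {J : V} {dl dr : Bool} (hS : J ∉ S) (hdr : dr = true) :
    ¬ dBlk Ga S J dl dr := by
  rintro (⟨_, h2, _⟩ | ⟨_, h2⟩)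
  · rw [hdr] at h2; simp at h2
  · exact hS h2

lemma not_dBlk_left_false {J : V} {dl dr : Bool} (hS : J ∉ S) (hdl : dl = false) :
    ¬ dBlk Ga S J dl dr := by
  rintro (⟨h1, _, _⟩ | ⟨_, h2⟩)
  · rw [hdl] at h1; simp at h1
  · exact hS h2

lemma not_dBlk_left_true {J : V} {dr : Bool}
    (h1 : dr = true → J ∉ S) (h2 : dr = false → J ∈ Ga.anc S) :
    ¬ dBlk Ga S J true dr := by
  rintro (⟨_, hdr, hna⟩ | ⟨hnc, hS⟩)
  · exact hna (h2 hdr)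
  · cases hq : dr with
    | true => exact (h1 hq) hS
    | false => exact hnc ⟨rfl, hq⟩

/-- Main transfer: σ-open walks in `G` yield d-open walks in the acyclification. -/
lemma g_to_ga [Fintype V] (hGa : IsAcyclification G Ga) :
    ∀ N (Z Y2 : V) (π : Wk G Z Y2), π.n ≤ N → π.sOpen S → Y2 ∉ G.scc Z →
      (∃ ρ : Wk Ga Z Y2, ρ.dOpen S) ∧
      (((π.d 0 = true → ¬(Z ∈ S ∧ π.f 1 ∉ G.scc Z)) ∧ (π.d 0 = false → Z ∈ G.anc S)) →
        ∃ zs ∈ G.scc Z, ∃ ρ : Wk Ga zs Y2, ρ.dOpen S ∧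
          (ρ.d 0 = true → zs ∉ S) ∧ (ρ.d 0 = false → zs ∈ Ga.anc S)) := by
  intro N
  induction N with
  | zero => intro Z Y2 π hn _ _; exact absurd π.pos (by omega)
  | succ N ih =>
    intro Z Y2 π hn hop hY
    classical
    have hfZ : π.f 0 ∈ G.scc Z := by rw [π.hA]; exact G.mem_scc_self Z
    have hex : ∃ i, π.f i ∉ G.scc Z := ⟨π.n, by rw [π.hB]; exact hY⟩
    set m := Nat.find hex with hmdef
    have hm : π.f m ∉ G.scc Z := Nat.find_spec hex
    have hmle : m ≤ π.n := Nat.find_min' hex (by rw [π.hB]; exact hY)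
    have hm0 : 0 < m := by
      rcases Nat.eq_zero_or_pos m with h | h
      · rw [h] at hm; exact absurd hfZ hm
      · exact h
    have hprefix : ∀ i < m, π.f i ∈ G.scc Z := by
      intro i hi
      have := Nat.find_min hex hi
      exact not_not.mp this
    have htn : m - 1 < π.n := by omega
    have huZ : π.f (m-1) ∈ G.scc Z := hprefix (m-1) (by omega)
    -- v ∉ scc of any c in scc Z
    have hvnotc : ∀ c ∈ G.scc Z, π.f m ∉ G.scc c := by
      intro c hc hvc
      exact hm (mem_scc_trans hvc hc)
    cases hq : π.d (m-1) with
    | true =>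
      -- cross edge u → v
      have hE_uv : G.Edge (π.f (m-1)) (π.f m) := by
        have := (π.he (m-1) htn).1 hq
        rwa [show m - 1 + 1 = m by omega] at this
      have huS : 0 < m - 1 → π.f (m-1) ∉ S := by
        intro h hS
        apply hop (m-1) h htn
        refine Or.inr ⟨?_, hS, Or.inl ⟨hq, ?_⟩⟩
        · rintro ⟨_, hf⟩; rw [hq] at hf; simp at hf
        · rw [show m - 1 + 1 = m by omega]
          intro hmem
          exact hm (mem_scc_trans hmem huZ)
      have huSZ : (π.d 0 = true → ¬(Z ∈ S ∧ π.f 1 ∉ G.scc Z)) → π.f (m-1) ∉ S := by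
        intro hin
        rcases Nat.eq_zero_or_pos (m-1) with h | h
        · have hm1 : m = 1 := by omega
          rw [h, π.hA]
          intro hZS
          apply hin (by rw [← h]; exact hq)
          exact ⟨hZS, by rw [hm1] at hm; exact hm⟩
        · exact huS h
      by_cases hYv : Y2 ∈ G.scc (π.f m)
      · -- direct edge u → Y2 finishes
        have huY : π.f (m-1) ∉ G.scc Y2 := by
          intro hc
          exact hm (mem_scc_trans (mem_scc_trans (scc_symm hYv) (scc_symm hc)) huZ)
        have hGaE : Ga.Edge (π.f (m-1)) Y2 :=
          acy_edge_of_cross hGa huY (scc_symm hYv) hE_uv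
        constructor
        · by_cases hZu : Z = π.f (m-1)
          · have hE' : Ga.Edge Z Y2 := by rw [hZu]; exact hGaE
            exact ⟨fwd Ga hE', fwd_dOpen hE'⟩
          · have hZscc : Z ∈ G.scc (π.f (m-1)) := scc_symm huZ
            have hm1pos : 0 < m - 1 := by
              rcases Nat.eq_zero_or_pos (m-1) with h | h
              · exfalso; apply hZu; rw [h, π.hA]
              · exact h
            rcases acy_tourn hGa hZscc hZu with e | e
            · exact ⟨append (fwd Ga e) (fwd Ga hGaE),
                dOpen_append (fwd_dOpen e) (fwd_dOpen hGaE)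
                  (not_dBlk_right_true (huS hm1pos) rfl)⟩
            · exact ⟨append (bwd Ga e) (fwd Ga hGaE),
                dOpen_append (bwd_dOpen e) (fwd_dOpen hGaE)
                  (not_dBlk_right_true (huS hm1pos) rfl)⟩
        · intro hin
          refine ⟨π.f (m-1), huZ, fwd Ga hGaE, fwd_dOpen hGaE, ?_, ?_⟩
          · intro _; exact huSZ hin.1
          · intro h; simp [fwd_d] at h
      · -- recurse on the suffix
        have hmn : m < π.n := by
          rcases Nat.eq_or_lt_of_le hmle with h | h
          · exfalso; apply hYv; rw [h, π.hB]; exact G.mem_scc_self Y2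
          · exact h
        set π' := π.drop m hmn with hπ'
        have hop' : π'.sOpen S := drop_sOpen hmn hop
        have hin' : (π'.d 0 = true → ¬(π.f m ∈ S ∧ π'.f 1 ∉ G.scc (π.f m))) ∧
            (π'.d 0 = false → π.f m ∈ G.anc S) := by
          constructor
          · intro hd ⟨hS, hsc⟩
            apply hop m hm0 hmn
            rw [drop_d] at hd
            simp only [Nat.zero_add] at hd
            refine Or.inr ⟨?_, hS, Or.inl ⟨hd, ?_⟩⟩
            · rintro ⟨_, hf⟩; rw [hd] at hf; simp at hf
            · rw [drop_f] at hsc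
              rwa [show (1:ℕ) + m = m + 1 by omega] at hsc
          · intro hd
            rw [drop_d] at hd
            simp only [Nat.zero_add] at hd
            by_contra hna
            apply hop m hm0 hmn
            exact Or.inl ⟨by rwa [], hd, hna⟩
        obtain ⟨-, hIHb⟩ := ih (π.f m) Y2 π' (by rw [drop_n]; omega) hop' hYv
        obtain ⟨ws, hws, ρ', hρ', hat1, hat2⟩ := hIHb hin'
        have huw : π.f (m-1) ∉ G.scc ws := by
          intro hc
          exact hvnotc (π.f (m-1)) huZ (scc_symm (mem_scc_trans hc hws))
        have hGaE : Ga.Edge (π.f (m-1)) ws :=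
          acy_edge_of_cross hGa huw (scc_symm hws) hE_uv
        have hmid : (append (fwd Ga hGaE) ρ').dOpen S :=
          dOpen_append (fwd_dOpen hGaE) hρ' (not_dBlk_left_true hat1 hat2)
        constructor
        · by_cases hZu : Z = π.f (m-1)
          · have hE' : Ga.Edge Z ws := by rw [hZu]; exact hGaE
            exact ⟨append (fwd Ga hE') ρ',
              dOpen_append (fwd_dOpen hE') hρ' (not_dBlk_left_true hat1 hat2)⟩
          · have hZscc : Z ∈ G.scc (π.f (m-1)) := scc_symm huZ
            have hm1pos : 0 < m - 1 := by
              rcases Nat.eq_zero_or_pos (m-1) with h | h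
              · exfalso; apply hZu; rw [h, π.hA]
              · exact h
            have hjunc : ¬ dBlk Ga S (π.f (m-1)) ((fwd Ga hGaE).d 0)
                ((append (fwd Ga hGaE) ρ').d 0) → True := fun _ => trivial
            rcases acy_tourn hGa hZscc hZu with e | e
            · refine ⟨append (fwd Ga e) (append (fwd Ga hGaE) ρ'),
                dOpen_append (fwd_dOpen e) hmid ?_⟩
              apply not_dBlk_right_true (huS hm1pos)
              rw [append_d_low _ _ (by rw [fwd_n]; omega)]
              rfl
            · refine ⟨append (bwd Ga e) (append (fwd Ga hGaE) ρ'),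
                dOpen_append (bwd_dOpen e) hmid ?_⟩
              apply not_dBlk_right_true (huS hm1pos)
              rw [append_d_low _ _ (by rw [fwd_n]; omega)]
              rfl
        · intro hin
          refine ⟨π.f (m-1), huZ, append (fwd Ga hGaE) ρ', hmid, ?_, ?_⟩
          · intro _; exact huSZ hin.1
          · intro h
            rw [append_d_low _ _ (by rw [fwd_n]; omega)] at h
            simp [fwd_d] at h
    | false =>
      -- cross edge v → u
      have hE_vu : G.Edge (π.f m) (π.f (m-1)) := by
        have := (π.he (m-1) htn).2 hq
        rwa [show m - 1 + 1 = m by omega] at this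
      have hGac : ∀ c ∈ G.scc Z, Ga.Edge (π.f m) c := by
        intro c hc
        exact acy_edge_of_cross hGa (hvnotc c hc) (mem_scc_trans huZ (scc_symm hc)) hE_vu
      have hvS : m < π.n → π.f m ∉ S := by
        intro h hS
        apply hop m hm0 h
        refine Or.inr ⟨?_, hS, Or.inr ⟨by rwa [], ?_⟩⟩
        · rintro ⟨hf, _⟩
          rw [show m - 1 = m - 1 by rfl] at hf
          rw [hq] at hf; simp at hf
        · intro hmem
          exact hm (mem_scc_trans (scc_symm hmem) huZ)
      obtain ⟨M, hM, hsrc⟩ := acy_source hGa Z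
      have hManc : ((π.d 0 = true → ¬(Z ∈ S ∧ π.f 1 ∉ G.scc Z)) ∧
          (π.d 0 = false → Z ∈ G.anc S)) → M ∈ Ga.anc S := by
        intro hin
        -- find a collider (or the endpoint) in the prefix that is an ancestor of S
        have hcexists : ∃ c ∈ G.scc Z, c ∈ G.anc S := by
          have hex2 : ∃ i, π.d i = false := ⟨m-1, hq⟩
          set i0 := Nat.find hex2 with hi0def
          have hi0 : π.d i0 = false := Nat.find_spec hex2
          have hi0le : i0 ≤ m - 1 := Nat.find_min' hex2 hq
          rcases Nat.eq_zero_or_pos i0 with h0 | h0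
          · refine ⟨Z, G.mem_scc_self Z, hin.2 ?_⟩
            rw [← h0]; exact hi0
          · have hprev : π.d (i0 - 1) = true := by
              have := Nat.find_min hex2 (show i0 - 1 < i0 by omega)
              cases hq2 : π.d (i0 - 1) with
              | false => exact absurd hq2 this
              | true => rfl
            have hanc : π.f i0 ∈ G.anc S := by
              by_contra hna
              exact hop i0 h0 (by omega) (Or.inl ⟨hprev, hi0, hna⟩)
            exact ⟨π.f i0, hprefix i0 (by omega), hanc⟩
        obtain ⟨c, hc, hcanc⟩ := hcexists
        refine acy_source_anc hGa hcanc M (mem_scc_trans hM (scc_symm hc)) ?_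
        intro c' hc' hne
        exact hsrc c' (by rwa [scc_eq hc] at hc') hne
      by_cases hvY : π.f m = Y2
      · constructor
        · have hE' : Ga.Edge Y2 Z := by rw [← hvY]; exact hGac Z (G.mem_scc_self Z)
          exact ⟨bwd Ga hE', bwd_dOpen hE'⟩
        · intro hin
          have hE' : Ga.Edge Y2 M := by rw [← hvY]; exact hGac M hM
          refine ⟨M, hM, bwd Ga hE', bwd_dOpen hE', ?_, ?_⟩
          · intro h; simp [bwd_d] at h
          · intro _; exact hManc hin
      · have hmn : m < π.n := by
          rcases Nat.eq_or_lt_of_le hmle with h | h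
          · exfalso; apply hvY; rw [h, π.hB]
          · exact h
        have hvS' : π.f m ∉ S := hvS hmn
        by_cases hYv : Y2 ∈ G.scc (π.f m)
        · -- tournament edge from v to Y2
          have hvY2 : π.f m ∈ G.scc Y2 := scc_symm hYv
          have htl : ∃ ρt : Wk Ga (π.f m) Y2, ρt.dOpen S := by
            rcases acy_tourn hGa hvY2 hvY with e | e
            · exact ⟨fwd Ga e, fwd_dOpen e⟩
            · exact ⟨bwd Ga e, bwd_dOpen e⟩
          obtain ⟨ρt, hρt⟩ := htl
          constructor
          · refine ⟨append (bwd Ga (hGac Z (G.mem_scc_self Z))) ρt,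
              dOpen_append (bwd_dOpen _) hρt ?_⟩
            apply not_dBlk_left_false hvS'
            rfl
          · intro hin
            refine ⟨M, hM, append (bwd Ga (hGac M hM)) ρt,
              dOpen_append (bwd_dOpen _) hρt (by apply not_dBlk_left_false hvS'; rfl), ?_, ?_⟩
            · intro h
              rw [append_d_low _ _ (by rw [bwd_n]; omega)] at h
              simp [bwd_d] at h
            · intro _; exact hManc hin
        · -- recurse on the suffix
          set π' := π.drop m hmn with hπ'
          have hop' : π'.sOpen S := drop_sOpen hmn hop
          obtain ⟨hIHa, -⟩ := ih (π.f m) Y2 π' (by rw [drop_n]; omega) hop' hYv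
          obtain ⟨ρ', hρ'⟩ := hIHa
          constructor
          · refine ⟨append (bwd Ga (hGac Z (G.mem_scc_self Z))) ρ',
              dOpen_append (bwd_dOpen _) hρ' ?_⟩
            apply not_dBlk_left_false hvS'
            rfl
          · intro hin
            refine ⟨M, hM, append (bwd Ga (hGac M hM)) ρ',
              dOpen_append (bwd_dOpen _) hρ' (by apply not_dBlk_left_false hvS'; rfl), ?_, ?_⟩
            · intro h
              rw [append_d_low _ _ (by rw [bwd_n]; omega)] at h
              simp [bwd_d] at h
            · intro _; exact hManc hin

end AuxMain
section AuxFinal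

variable {V : Type} {G Ga : DiGraph V}

open DiGraph Wk

lemma single_inj {A B : V} (w : Wk Ga A B) (h1 : w.n = 1) (hAB : A ≠ B) :
    ∀ i ≤ w.n, ∀ j ≤ w.n, w.f i = w.f j → i = j := by
  intro i hi j hj hf
  rw [h1] at hi hj
  have hB' : w.f 1 = B := by rw [← h1]; exact w.hB
  have hA' : w.f 0 = A := w.hA
  interval_cases i <;> interval_cases j
  · rfl
  · exact absurd (hA'.symm.trans (hf.trans hB')) hAB
  · exact absurd (hA'.symm.trans (hf.symm.trans hB')) hAB
  · rfl

/-- The central equivalence: σ-separation in `G` coincides with d-separation in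
any σ-acyclification. -/
lemma sigmaSep_iff_dSep [Fintype V] (hGa : IsAcyclification G Ga) (X W : V)
    (hXW : X ≠ W) (S : Set V) : G.sigmaSep X W S ↔ Ga.dSep X W S := by
  constructor
  · intro h p
    by_contra hnb
    have hop : p.toWk.dOpen S := by
      intro i h1 h2 hblk
      exact hnb ((p.dBlocked_iff S).mpr ⟨i, h1, h2, hblk⟩)
    obtain ⟨π, hπ, -⟩ := ga_to_g hGa p.toWk.n X W p.toWk le_rfl hop
    obtain ⟨w2, hw2, hinj⟩ := exists_inj_of_sOpen hXW ⟨π, hπ⟩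
    exact (w2.toPath_not_sigmaBlocked hinj hw2) (h (w2.toPath hinj))
  · intro h p
    by_contra hnb
    have hop : p.toWk.sOpen S := by
      intro i h1 h2 hblk
      exact hnb ((p.sigmaBlocked_iff S).mpr ⟨i, h1, h2, hblk⟩)
    by_cases hscc : W ∈ G.scc X
    · have hXsW : X ∈ G.scc W := scc_symm hscc
      have hq : ∃ w : Wk Ga X W, w.n = 1 := by
        rcases acy_tourn hGa hXsW hXW with e | e
        · exact ⟨fwd Ga e, rfl⟩
        · exact ⟨bwd Ga e, rfl⟩
      obtain ⟨w, hw1⟩ := hq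
      have hinj := single_inj w hw1 hXW
      obtain ⟨j, -⟩ := h (w.toPath hinj)
      have hk : (w.toPath hinj).k = 0 := by
        show w.n - 1 = 0
        omega
      rw [hk] at j
      exact j.elim0
    · obtain ⟨⟨ρ, hρ⟩, -⟩ := g_to_ga hGa p.toWk.n X W p.toWk le_rfl hop hscc
      obtain ⟨w2, hw2, hinj⟩ := exists_inj_of_dOpen hXW ⟨ρ, hρ⟩
      exact (w2.toPath_not_dBlocked hinj hw2) (h (w2.toPath hinj))

end AuxFinal
/-- The observed Markov blanket is invariant under
σ-acyclification: `MB_σ^G(Y) = MB_d^{G^acy}(Y)`. -/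
theorem sigmaMB_eq_dMB_acyclification {V : Type} [Fintype V]
    (G Ga : DiGraph V) (Obs Lat : Set V)
    (hpart : Obs ∪ Lat = Set.univ) (hdisj : Obs ∩ Lat = ∅)
    (hGa : IsAcyclification G Ga) (Y : V) (hY : Y ∈ Obs) (S : Set V) :
    G.IsSigmaMB Obs Y S ↔ Ga.IsDMB Obs Y S := by
  have key : ∀ (W : V) (T : Set V), Y ≠ W → (G.sigmaSep Y W T ↔ Ga.dSep Y W T) :=
    fun W T hYW => sigmaSep_iff_dSep hGa Y W hYW T
  have hne : ∀ {W : V} {T : Set V}, W ∈ Obs \ (T ∪ {Y}) → Y ≠ W := by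
    intro W T hW h
    exact hW.2 (Or.inr (by rw [← h]; rfl))
  constructor
  · rintro ⟨h1, h2, h3⟩
    refine ⟨h1, ?_, ?_⟩
    · intro W hW
      exact (key W S (hne hW)).mp (h2 W hW)
    · intro T hT hsep
      apply h3 T hT
      intro W hW
      exact (key W T (hne hW)).mpr (hsep W hW)
  · rintro ⟨h1, h2, h3⟩
    refine ⟨h1, ?_, ?_⟩
    · intro W hW
      exact (key W S (hne hW)).mpr (h2 W hW)
    · intro T hT hsep
      apply h3 T hT
      intro W hW
      exact (key W T (hne hW)).mp (hsep W hW)
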